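/- For semi-implicit methods, the growth function 𝔡_s defined by 𝔡_s(∅)=0, 𝔡_s(•_l)=1, 𝔡_s([τ₁,…,τ_κ]_l)=1 for l>0, and for color-0 roots 𝔡_s([τ₁,…,τ_κ]_0) = max_j 𝔡_s(τ_j) if exactly one child attains the maximum and max_j 𝔡_s(τ_j)+1 otherwise, satisfies: if 𝔡_s(τ)=k with k≥1 then ρ(τ) ≥ (3/4)·2^k − 1. -/

import Mathlib

inductive CTree (m : ℕ) : Type
  | node : Fin (m + 1) → List (CTree m) → CTree m

namespace CTree

variable {m : ℕ}

def rho : CTree m → ℚ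
  | .node l ts => (if (l : ℕ) = 0 then 1 else 1/2) + (ts.attach.map (fun t => rho t.1)).sum
decreasing_by
  all_goals try simp only [CTree.node.sizeOf_spec, List.cons.sizeOf_spec, List.nil.sizeOf_spec]
  all_goals try have := List.sizeOf_lt_of_mem t.2
  all_goals omega

def height : CTree m → ℕ
  | .node _ ts => 1 + (ts.attach.map (fun t => height t.1)).foldr max 0
decreasing_by
  all_goals try simp only [CTree.node.sizeOf_spec, List.cons.sizeOf_spec, List.nil.sizeOf_spec]
  all_goals try have := List.sizeOf_lt_of_mem t.2
  all_goals omega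

def ram : CTree m → ℕ
  | .node _ [] => 1
  | .node _ [t] => ram t
  | .node _ ts => 1 + (ts.attach.map (fun t => ram t.1)).foldr max 0
decreasing_by
  all_goals try simp only [CTree.node.sizeOf_spec, List.cons.sizeOf_spec, List.nil.sizeOf_spec]
  all_goals try have := List.sizeOf_lt_of_mem t.2
  all_goals omega

def dbl : CTree m → ℕ
  | .node _ [] => 1
  | .node _ ts =>
      let ds := ts.attach.map (fun t => dbl t.1)
      let M := ds.foldr max 0
      if 2 ≤ ds.count M then M + 1 else M
decreasing_by
  all_goals try simp only [CTree.node.sizeOf_spec, List.cons.sizeOf_spec, List.nil.sizeOf_spec]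
  all_goals try have := List.sizeOf_lt_of_mem t.2
  all_goals omega


/-- semi-implicit height-type growth function 𝔥ₛ -/
def hs : CTree m → ℕ
  | .node l ts => if 0 < (l : ℕ) then 1 else 1 + (ts.attach.map (fun t => hs t.1)).foldr max 0
decreasing_by
  all_goals try simp only [CTree.node.sizeOf_spec, List.cons.sizeOf_spec, List.nil.sizeOf_spec]
  all_goals try have := List.sizeOf_lt_of_mem t.2
  all_goals omega

/-- semi-implicit ramification-type growth function 𝔯ₛ -/
def rs : CTree m → ℕ
  | .node _ [] => 1
  | .node l [t] => if 0 < (l : ℕ) then 1 else rs t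
  | .node l ts => if 0 < (l : ℕ) then 1 else 1 + (ts.attach.map (fun t => rs t.1)).foldr max 0
decreasing_by
  all_goals try simp only [CTree.node.sizeOf_spec, List.cons.sizeOf_spec, List.nil.sizeOf_spec]
  all_goals try have := List.sizeOf_lt_of_mem t.2
  all_goals omega

/-- semi-implicit doubling-type growth function 𝔡ₛ -/
def dsm : CTree m → ℕ
  | .node _ [] => 1
  | .node l ts =>
      if 0 < (l : ℕ) then 1 else
      let vals := ts.attach.map (fun t => dsm t.1)
      let M := vals.foldr max 0
      if 2 ≤ vals.count M then M + 1 else M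
decreasing_by
  all_goals try simp only [CTree.node.sizeOf_spec, List.cons.sizeOf_spec, List.nil.sizeOf_spec]
  all_goals try have := List.sizeOf_lt_of_mem t.2
  all_goals omega


end CTree

namespace CTree
variable {m : ℕ}

lemma rho_node (l : Fin (m+1)) (ts : List (CTree m)) :
    rho (node l ts) = (if (l : ℕ) = 0 then 1 else 1/2) + (ts.map rho).sum := by
  rw [rho, List.attach_map_val]

lemma dsm_nil (l : Fin (m+1)) : dsm (node l ([] : List (CTree m))) = 1 := by
  rw [dsm]

lemma dsm_cons (l : Fin (m+1)) (t : CTree m) (ts : List (CTree m)) :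
    dsm (node l (t :: ts)) =
      if 0 < (l : ℕ) then 1 else
      if 2 ≤ ((t :: ts).map dsm).count (((t :: ts).map dsm).foldr max 0)
      then ((t :: ts).map dsm).foldr max 0 + 1
      else ((t :: ts).map dsm).foldr max 0 := by
  rw [dsm, List.attach_map_val]
  simp

lemma rho_nonneg : ∀ (τ : CTree m), 0 ≤ rho τ
  | .node l ts => by
    rw [rho_node]
    have h1 : 0 ≤ (ts.map rho).sum := by
      apply List.sum_nonneg
      intro x hx
      obtain ⟨t, ht, rfl⟩ := List.mem_map.1 hx
      exact rho_nonneg t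
    split <;> linarith
decreasing_by
  all_goals simp only [CTree.node.sizeOf_spec]
  all_goals have := List.sizeOf_lt_of_mem ht
  all_goals omega

lemma half_le_rho (τ : CTree m) : (1:ℚ)/2 ≤ rho τ := by
  obtain ⟨l, ts⟩ := τ
  rw [rho_node]
  have h1 : 0 ≤ (ts.map rho).sum := by
    apply List.sum_nonneg
    intro x hx
    obtain ⟨t, ht, rfl⟩ := List.mem_map.1 hx
    exact rho_nonneg t
  split <;> linarith

lemma foldr_max_mem (l : List ℕ) (hl : l ≠ []) : l.foldr max 0 ∈ l := by
  induction l with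
  | nil => simp at hl
  | cons a t ih =>
    rcases eq_or_ne t [] with rfl | ht
    · simp
    · have hF := ih ht
      rcases Nat.le_total (t.foldr max 0) a with h | h
      · have he : (a :: t).foldr max 0 = a := by
          simp [Nat.max_eq_left h]
        rw [he]; exact List.mem_cons_self
      · have he : (a :: t).foldr max 0 = t.foldr max 0 := by
          simp [Nat.max_eq_right h]
        rw [he]; exact List.mem_cons_of_mem _ hF

/-- the bound function -/
def fb (k : ℕ) : ℚ := 3/4 * 2 ^ k - 1

lemma mem_le_sum (l : List (ℕ × ℚ)) (h0 : ∀ q ∈ l, 0 ≤ q.2) (p : ℕ × ℚ) (hp : p ∈ l) :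
    p.2 ≤ (l.map Prod.snd).sum := by
  apply List.single_le_sum
  · intro x hx; obtain ⟨q, hq, rfl⟩ := List.mem_map.1 hx; exact h0 q hq
  · exact List.mem_map_of_mem hp

lemma count_sum (l : List (ℕ × ℚ)) (M : ℕ)
    (h0 : ∀ p ∈ l, fb p.1 ≤ p.2 ∧ 0 ≤ p.2)
    (hc : 2 ≤ (l.map Prod.fst).count M) :
    2 * fb M ≤ (l.map Prod.snd).sum := by
  induction l with
  | nil => simp at hc
  | cons a t ih =>
    have ha2 := h0 a List.mem_cons_self
    simp only [List.map_cons, List.count_cons, List.sum_cons] at hc ⊢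
    by_cases ha : a.1 = M
    · have h1 : 1 ≤ (t.map Prod.fst).count M := by
        rw [if_pos (by simpa using ha)] at hc; omega
      have hmem : M ∈ t.map Prod.fst := List.count_pos_iff.1 (by omega)
      obtain ⟨p, hp, hpM⟩ := List.mem_map.1 hmem
      have hps : p.2 ≤ (t.map Prod.snd).sum :=
        mem_le_sum t (fun q hq => (h0 q (List.mem_cons_of_mem _ hq)).2) p hp
      have hfp := (h0 p (List.mem_cons_of_mem _ hp)).1
      rw [hpM] at hfp
      have := ha2.1
      rw [ha] at this
      linarith
    · have hc' : 2 ≤ (t.map Prod.fst).count M := by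
        rw [if_neg (by simpa using ha)] at hc; omega
      have := ih (fun p hp => h0 p (List.mem_cons_of_mem _ hp)) hc'
      linarith [ha2.2]

lemma fb_le_rho : ∀ (τ : CTree m), fb (dsm τ) ≤ rho τ
  | .node l ts => by
    have hIH : ∀ t ∈ ts, fb (dsm t) ≤ rho t := fun t ht => fb_le_rho t
    rcases ts with _ | ⟨t, ts'⟩
    · rw [dsm_nil, rho_node]
      have : fb 1 = 1/2 := by norm_num [fb]
      rw [this]
      split <;> norm_num
    · rw [dsm_cons, rho_node]
      by_cases hl : 0 < (l : ℕ)
      · simp only [hl, if_true]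
        have : fb 1 = 1/2 := by norm_num [fb]
        rw [this]
        have h1 : 0 ≤ ((t :: ts').map rho).sum := by
          apply List.sum_nonneg
          intro x hx
          obtain ⟨u, hu, rfl⟩ := List.mem_map.1 hx
          exact rho_nonneg u
        split <;> linarith
      · simp only [hl, if_false]
        have hl0 : (l : ℕ) = 0 := by omega
        simp only [hl0, if_true]
        set ts := t :: ts' with hts
        set vals := ts.map dsm with hvals
        set M := vals.foldr max 0 with hM
        have hsum : 0 ≤ (ts.map rho).sum := by
          apply List.sum_nonneg
          intro x hx
          obtain ⟨u, hu, rfl⟩ := List.mem_map.1 hx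
          exact rho_nonneg u
        set L : List (ℕ × ℚ) := ts.map (fun u => (dsm u, rho u)) with hL
        have hLfst : L.map Prod.fst = vals := by simp [hL, hvals]
        have hLsnd : L.map Prod.snd = ts.map rho := by simp [hL]
        have hLh : ∀ p ∈ L, fb p.1 ≤ p.2 ∧ 0 ≤ p.2 := by
          intro p hp
          obtain ⟨u, hu, rfl⟩ := List.mem_map.1 hp
          exact ⟨hIH u hu, rho_nonneg u⟩
        by_cases hc : 2 ≤ vals.count M
        · simp only [hc, if_true]
          have h2 : 2 * fb M ≤ (ts.map rho).sum := by
            rw [← hLsnd]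
            exact count_sum L M hLh (by rw [hLfst]; exact hc)
          have : fb (M + 1) = 2 * fb M + 1 := by
            simp [fb, pow_succ]; ring
          rw [this]
          linarith
        · simp only [hc, if_false]
          have hmem : M ∈ vals := foldr_max_mem vals (by simp [hvals, hts])
          obtain ⟨u, hu, huM⟩ := List.mem_map.1 hmem
          have h1 : rho u ≤ (ts.map rho).sum := by
            rw [← hLsnd]
            exact mem_le_sum L (fun q hq => (hLh q hq).2) (dsm u, rho u)
              (List.mem_map_of_mem hu)
          have h2 := hIH u hu
          rw [huM] at h2
          linarith
decreasing_by
  all_goals simp only [CTree.node.sizeOf_spec, List.cons.sizeOf_spec]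
  all_goals have := List.sizeOf_lt_of_mem ht
  all_goals omega

end CTree

open CTree in
theorem stmt11 (m : ℕ) (τ : CTree m) (k : ℕ) (hk : 1 ≤ k) (h : dsm τ = k) :
    (3 : ℚ) / 4 * 2 ^ k - 1 ≤ rho τ := by
  have := fb_le_rho τ
  rw [h] at this
  simpa [fb] using this
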